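/- For every connected graph G of order n with minimum degree δ and every integer k with 2 ≤ k ≤ n, SW_k(G) ≤ ((k-1)/(k+1))·(3(n+1)/(δ+1))·C(n,k) + (3δ/(δ+1) + 2k)·C(n,k), and hence the average Steiner k-distance satisfies μ_k(G) ≤ ((k-1)/(k+1))·(3(n+1)/(δ+1)) + 3δ/(δ+1) + 2k. -/

import Mathlib

open scoped Classical
open Finset

noncomputable def steinerDist {V : Type*} (G : SimpleGraph V) (S : Finset V) : ℕ :=
  sInf {m : ℕ | ∃ H : G.Subgraph, H.Connected ∧ ↑S ⊆ H.verts ∧ H.edgeSet.ncard = m}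

noncomputable def swk {V : Type*} [Fintype V] (k : ℕ) (G : SimpleGraph V) : ℕ :=
  ∑ S ∈ Finset.powersetCard k (Finset.univ : Finset V), steinerDist G S

noncomputable def wswk {V : Type*} [Fintype V] (k : ℕ) (G : SimpleGraph V) (c : V → ℕ) : ℕ :=
  ∑ S ∈ Finset.powersetCard k (Finset.univ : Finset (Σ v : V, Fin (c v))), steinerDist G (S.image Sigma.fst)

private lemma abel_id (F g : ℕ → ℚ) (t : ℕ) :
    ∑ j ∈ Finset.range t, (F (j+1) - F j) * g (j+1)
      = F t * g t - F 0 * g 0 + ∑ j ∈ Finset.range t, F j * (g j - g (j+1)) := by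
  induction t with
  | zero => simp
  | succ t ih => rw [Finset.sum_range_succ, ih, Finset.sum_range_succ]; ring

private lemma choose_pascal_ineq (n k' j : ℕ) (h : 2*(j+1) ≤ n) :
    (j+1).choose (k'+1) + (n-j-1).choose (k'+1) ≤ j.choose (k'+1) + (n-j).choose (k'+1) := by
  have h1 : (j+1).choose (k'+1) = j.choose k' + j.choose (k'+1) := Nat.choose_succ_succ j k'
  have h2 : n - j = (n - j - 1) + 1 := by omega
  have h3 : (n-j).choose (k'+1) = (n-j-1).choose k' + (n-j-1).choose (k'+1) := by
    rw [h2]; exact Nat.choose_succ_succ _ k'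
  have h4 : j.choose k' ≤ (n-j-1).choose k' := Nat.choose_le_choose k' (by omega)
  omega

private lemma parity_sum (F : ℕ → ℚ) (n J : ℕ) (hJ2 : J = n/2)
    (hsymm : ∀ j ≤ n, F (n - j) = F j) :
    ∑ j ∈ Finset.range (n+1), F j
      = 2 * (∑ j ∈ Finset.range J, F j) + (((n:ℚ))+1-2*(J:ℚ)) * F J := by
  have hJn : J + 1 ≤ n + 1 := by omega
  have hsplit : (∑ j ∈ Finset.range (J+1), F j) + (∑ j ∈ Finset.Ico (J+1) (n+1), F j)
      = ∑ j ∈ Finset.range (n+1), F j := by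
    simp only [Finset.range_eq_Ico]
    exact Finset.sum_Ico_consecutive F (by omega) hJn
  have hrefl : (∑ j ∈ Finset.Ico (J+1) (n+1), F j) = ∑ j ∈ Finset.range (n - J), F j := by
    have h1 : (∑ j ∈ Finset.Ico 0 (n - J), F (n - j)) = ∑ j ∈ Finset.Ico (n+1-(n-J)) (n+1-0), F j :=
      Finset.sum_Ico_reflect F 0 (by omega)
    have h2 : n + 1 - (n - J) = J + 1 := by omega
    rw [h2] at h1
    simp only [Nat.sub_zero] at h1
    rw [← h1, ← Finset.range_eq_Ico]
    apply Finset.sum_congr rfl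
    intro j hj
    simp only [Finset.mem_range] at hj
    exact hsymm j (by omega)
  rcases (by omega : n = 2*J ∨ n = 2*J + 1) with h | h
  · have h3 : n - J = J := by omega
    rw [← hsplit, hrefl, h3, Finset.sum_range_succ]
    have : ((n:ℚ)) + 1 - 2*(J:ℚ) = 1 := by
      have : (n:ℚ) = 2*(J:ℚ) := by exact_mod_cast congrArg (Nat.cast : ℕ → ℚ) h
      linarith
    rw [this]; ring
  · have h3 : n - J = J + 1 := by omega
    rw [← hsplit, hrefl, h3, Finset.sum_range_succ (f := F)]
    have : ((n:ℚ)) + 1 - 2*(J:ℚ) = 2 := by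
      have : (n:ℚ) = 2*(J:ℚ) + 1 := by exact_mod_cast congrArg (Nat.cast : ℕ → ℚ) h
      linarith
    rw [this]; ring

private lemma sum_F_value (n k' : ℕ) (hk : k' + 1 ≤ n) :
    ∑ j ∈ Finset.range (n+1),
      ((n.choose (k'+1):ℚ) - (j.choose (k'+1):ℚ) - ((n-j).choose (k'+1):ℚ))
      = (n.choose (k'+1):ℚ) * ((n:ℚ)+1) * (k':ℚ) / ((k':ℚ)+2) := by
  have h1 : ∑ j ∈ Finset.range (n+1), (j.choose (k'+1)) = (n+1).choose (k'+2) := by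
    rw [← Nat.sum_Icc_choose n (k'+1)]
    symm
    apply Finset.sum_subset
    · intro x hx
      simp only [Finset.mem_Icc] at hx
      simp only [Finset.mem_range]; omega
    · intro x hx hnx
      simp only [Finset.mem_range] at hx
      simp only [Finset.mem_Icc] at hnx
      exact Nat.choose_eq_zero_of_lt (by omega)
  have h2 : ∑ j ∈ Finset.range (n+1), ((n-j).choose (k'+1)) = (n+1).choose (k'+2) := by
    have := Finset.sum_range_reflect (fun j => j.choose (k'+1)) (n+1)
    simp only [Nat.add_sub_cancel] at this
    rw [← h1, ← this]
  have h3 : (n+1) * n.choose (k'+1) = (n+1).choose (k'+2) * (k'+2) :=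
    Nat.add_one_mul_choose_eq n (k'+1)
  have hsum : ∑ j ∈ Finset.range (n+1),
      ((n.choose (k'+1):ℚ) - (j.choose (k'+1):ℚ) - ((n-j).choose (k'+1):ℚ))
      = ((n:ℚ)+1) * (n.choose (k'+1):ℚ) - 2 * ((n+1).choose (k'+2) : ℚ) := by
    rw [Finset.sum_sub_distrib, Finset.sum_sub_distrib, Finset.sum_const, Finset.card_range]
    rw [← Nat.cast_sum, ← Nat.cast_sum, h1, h2]
    push_cast
    ring
  rw [hsum]
  have h3q : ((n:ℚ)+1) * (n.choose (k'+1):ℚ) = ((n+1).choose (k'+2) : ℚ) * ((k':ℚ)+2) := by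
    exact_mod_cast congrArg (Nat.cast : ℕ → ℚ) h3
  have hk2 : ((k':ℚ)+2) ≠ 0 := by positivity
  field_simp
  nlinarith [h3q]

private lemma key_count (n k d : ℕ) (hk : 2 ≤ k) (hkn : k ≤ n)
    (cuts : Finset ℕ) (Wt : ℕ → ℕ)
    (hWn : ∀ z ∈ cuts, Wt z ≤ n)
    (hpack : ∀ j : ℕ, 0 < j →
      ((cuts.filter (fun z => j ≤ Wt z ∧ j ≤ n - Wt z)).Nonempty) →
      2*j + ((cuts.filter (fun z => j ≤ Wt z ∧ j ≤ n - Wt z)).card) * (d+1) ≤ n + (d+1)) :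
    ∑ z ∈ cuts, ((n.choose k : ℚ) - ((Wt z).choose k : ℚ) - ((n - Wt z).choose k : ℚ))
      ≤ (n.choose k : ℚ) * (((n:ℚ)+1) * ((k:ℚ)-1) / (((k:ℚ)+1)*((d:ℚ)+1)) + (d:ℚ) / ((d:ℚ)+1)) := by
  obtain ⟨k', rfl⟩ : ∃ k', k = k' + 1 := ⟨k-1, by omega⟩
  set Cq : ℚ := ((n.choose (k'+1) : ℕ) : ℚ) with hCq
  set F : ℕ → ℚ := fun j => Cq - (j.choose (k'+1) : ℚ) - ((n-j).choose (k'+1) : ℚ) with hF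
  set J : ℕ := n / 2 with hJ
  have hd1 : (0:ℚ) < (d:ℚ) + 1 := by positivity
  have hF0 : F 0 = 0 := by
    simp [hF, hCq, Nat.choose_eq_zero_of_lt (by omega : 0 < k' + 1)]
  have hFle : ∀ j, F j ≤ Cq := by
    intro j
    have h1 : (0:ℚ) ≤ (j.choose (k'+1) : ℚ) := by positivity
    have h2 : (0:ℚ) ≤ ((n-j).choose (k'+1) : ℚ) := by positivity
    simp only [hF]; linarith
  have hmono : ∀ j, 2*(j+1) ≤ n → F j ≤ F (j+1) := by
    intro j hj
    have := choose_pascal_ineq n k' j hj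
    have h2 : ((j+1).choose (k'+1) : ℚ) + ((n-j-1).choose (k'+1) : ℚ)
        ≤ (j.choose (k'+1) : ℚ) + ((n-j).choose (k'+1) : ℚ) := by exact_mod_cast this
    have h3 : n - (j+1) = n - j - 1 := by omega
    simp only [hF, h3]; linarith
  have hsymm : ∀ j ≤ n, F (n - j) = F j := by
    intro j hj
    have h1 : n - (n - j) = j := by omega
    simp only [hF, h1]; ring
  set a : ℕ → ℕ := fun z => min (Wt z) (n - Wt z) with ha
  have hterm : ∀ z ∈ cuts,
      (Cq - ((Wt z).choose (k'+1) : ℚ) - ((n - Wt z).choose (k'+1) : ℚ)) = F (a z) := by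
    intro z hz
    rcases le_total (Wt z) (n - Wt z) with h | h
    · have : a z = Wt z := by simp [ha, h]
      rw [this]
    · have h1 : a z = n - Wt z := by simp [ha, h]
      have h2 : n - (n - Wt z) = Wt z := by have := hWn z hz; omega
      rw [h1]; simp only [hF, h2]; ring
  have haJ : ∀ z ∈ cuts, a z ≤ J := by
    intro z hz
    have h1 := hWn z hz
    have h2 : a z = min (Wt z) (n - Wt z) := rfl
    have h3 : J = n / 2 := rfl
    omega
  have htel : ∀ z ∈ cuts, F (a z)
      = ∑ j ∈ Finset.range J, (if j < a z then (F (j+1) - F j) else 0) := by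
    intro z hz
    rw [Finset.sum_ite, Finset.sum_const_zero, add_zero]
    have hfil : Finset.filter (fun j => j < a z) (Finset.range J) = Finset.range (a z) := by
      ext j; simp only [Finset.mem_filter, Finset.mem_range]
      have := haJ z hz; omega
    rw [hfil, Finset.sum_range_sub F (a z), hF0, sub_zero]
  set gq : ℕ → ℚ := fun j => (((n:ℚ)) - 2*(j:ℚ))/((d:ℚ)+1) + 1 with hgq
  have hcard : ∀ j ∈ Finset.range J, ((cuts.filter (fun z => j < a z)).card : ℚ) ≤ gq (j+1) := by
    intro j hjr
    simp only [Finset.mem_range] at hjr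
    have h2jn : 2*(j+1) ≤ n := by omega
    have hfil : cuts.filter (fun z => j < a z)
        = cuts.filter (fun z => (j+1) ≤ Wt z ∧ (j+1) ≤ n - Wt z) := by
      ext z
      simp only [Finset.mem_filter, and_congr_right_iff]
      intro hz
      have h2 : a z = min (Wt z) (n - Wt z) := rfl
      omega
    rw [hfil]
    rcases Finset.eq_empty_or_nonempty (cuts.filter (fun z => (j+1) ≤ Wt z ∧ (j+1) ≤ n - Wt z))
      with he | hne
    · rw [he]
      simp only [Finset.card_empty, Nat.cast_zero, hgq]
      have : (0:ℚ) ≤ ((n:ℚ) - 2*((j:ℚ)+1)) := by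
        have : ((2*(j+1):ℕ):ℚ) ≤ ((n:ℕ):ℚ) := by exact_mod_cast h2jn
        push_cast at this ⊢
        linarith
      have := div_nonneg this (le_of_lt hd1)
      push_cast
      linarith
    · have hp := hpack (j+1) (by omega) hne
      set c := (cuts.filter (fun z => (j+1) ≤ Wt z ∧ (j+1) ≤ n - Wt z)).card with hc
      have hcast : 2*((j:ℚ)+1) + (c:ℚ)*((d:ℚ)+1) ≤ (n:ℚ) + ((d:ℚ)+1) := by
        exact_mod_cast hp
      simp only [hgq]
      rw [div_add' _ _ _ (ne_of_gt hd1), le_div_iff₀ hd1]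
      push_cast
      nlinarith
  have hDnn : ∀ j ∈ Finset.range J, (0:ℚ) ≤ F (j+1) - F j := by
    intro j hjr
    simp only [Finset.mem_range] at hjr
    have : 2*(j+1) ≤ n := by omega
    linarith [hmono j this]
  have step1 : ∑ z ∈ cuts, (Cq - ((Wt z).choose (k'+1) : ℚ) - ((n - Wt z).choose (k'+1) : ℚ))
      ≤ ∑ j ∈ Finset.range J, (F (j+1) - F j) * gq (j+1) := by
    rw [Finset.sum_congr rfl hterm, Finset.sum_congr rfl htel, Finset.sum_comm]
    apply Finset.sum_le_sum
    intro j hjr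
    rw [Finset.sum_ite, Finset.sum_const_zero, add_zero, Finset.sum_const, nsmul_eq_mul]
    calc ((cuts.filter (fun z => j < a z)).card : ℚ) * (F (j+1) - F j)
        ≤ gq (j+1) * (F (j+1) - F j) :=
          mul_le_mul_of_nonneg_right (hcard j hjr) (hDnn j hjr)
      _ = (F (j+1) - F j) * gq (j+1) := by ring
  have hgdiff : ∀ j : ℕ, gq j - gq (j+1) = 2/((d:ℚ)+1) := by
    intro j
    simp only [hgq]
    push_cast
    field_simp
    ring
  have step2 : ∑ j ∈ Finset.range J, (F (j+1) - F j) * gq (j+1)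
      = F J * gq J + (2/((d:ℚ)+1)) * ∑ j ∈ Finset.range J, F j := by
    rw [abel_id F gq J, hF0]
    have : ∑ j ∈ Finset.range J, F j * (gq j - gq (j+1))
        = (2/((d:ℚ)+1)) * ∑ j ∈ Finset.range J, F j := by
      rw [Finset.mul_sum]
      apply Finset.sum_congr rfl
      intro j _
      rw [hgdiff j]; ring
    rw [this]; ring
  have hparity := parity_sum F n J hJ hsymm
  have hSval : ∑ j ∈ Finset.range (n+1), F j = Cq * ((n:ℚ)+1) * (k':ℚ) / ((k':ℚ)+2) := by
    simp only [hF, hCq]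
    exact sum_F_value n k' (by omega)
  -- final numeric assembly
  have hfin : F J * gq J + (2/((d:ℚ)+1)) * ∑ j ∈ Finset.range J, F j
      ≤ Cq * (((n:ℚ)+1) * (((k'+1:ℕ):ℚ)-1) / ((((k'+1:ℕ):ℚ)+1)*((d:ℚ)+1)) + (d:ℚ) / ((d:ℚ)+1)) := by
    have h2S : 2 * (∑ j ∈ Finset.range J, F j)
        = (∑ j ∈ Finset.range (n+1), F j) - (((n:ℚ))+1-2*(J:ℚ)) * F J := by
      rw [hparity]; ring
    have hLHS : F J * gq J + (2/((d:ℚ)+1)) * ∑ j ∈ Finset.range J, F j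
        = ((∑ j ∈ Finset.range (n+1), F j) + (d:ℚ) * F J) / ((d:ℚ)+1) := by
      have hgqJ : gq J = (((n:ℚ)) - 2*(J:ℚ))/((d:ℚ)+1) + 1 := rfl
      rw [hgqJ]
      field_simp
      nlinarith [h2S]
    rw [hLHS, hSval]
    have hFJ : F J ≤ Cq := hFle J
    have hdn : (0:ℚ) ≤ (d:ℚ) := by positivity
    have hnum : Cq * ((n:ℚ)+1) * (k':ℚ) / ((k':ℚ)+2) + (d:ℚ) * F J
        ≤ Cq * ((n:ℚ)+1) * (k':ℚ) / ((k':ℚ)+2) + (d:ℚ) * Cq :=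
      by linarith [mul_le_mul_of_nonneg_left hFJ hdn]
    have hdiv := (div_le_div_iff_of_pos_right hd1).mpr hnum
    refine le_trans hdiv (le_of_eq ?_)
    have hne1 : ((k':ℚ)+2) ≠ 0 := by positivity
    have hne2 : ((d:ℚ)+1) ≠ 0 := ne_of_gt hd1
    push_cast
    field_simp
    ring
  calc ∑ z ∈ cuts, (Cq - ((Wt z).choose (k'+1) : ℚ) - ((n - Wt z).choose (k'+1) : ℚ))
      ≤ ∑ j ∈ Finset.range J, (F (j+1) - F j) * gq (j+1) := step1
    _ = F J * gq J + (2/((d:ℚ)+1)) * ∑ j ∈ Finset.range J, F j := step2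
    _ ≤ _ := hfin

private def ancp (par : ℕ → ℕ) (x z : ℕ) : Prop := ∃ t : ℕ, par^[t] x = z

private lemma par_le {par : ℕ → ℕ} (hpar0 : par 0 = 0) (hpar : ∀ i, 0 < i → par i < i)
    (i : ℕ) : par i ≤ i := by
  rcases Nat.eq_zero_or_pos i with h | h
  · subst h; rw [hpar0]
  · exact le_of_lt (hpar i h)

private lemma iterate_par_le {par : ℕ → ℕ} (hpar0 : par 0 = 0)
    (hpar : ∀ i, 0 < i → par i < i) : ∀ (t x : ℕ), par^[t] x ≤ x := by
  intro t
  induction t with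
  | zero => intro x; simp
  | succ t ih =>
    intro x
    rw [Function.iterate_succ_apply]
    exact le_trans (ih (par x)) (par_le hpar0 hpar x)

private lemma ancp_refl {par : ℕ → ℕ} (x : ℕ) : ancp par x x := ⟨0, rfl⟩

private lemma ancp_le {par : ℕ → ℕ} (hpar0 : par 0 = 0) (hpar : ∀ i, 0 < i → par i < i)
    {x z : ℕ} (h : ancp par x z) : z ≤ x := by
  obtain ⟨t, rfl⟩ := h
  exact iterate_par_le hpar0 hpar t x

private lemma ancp_step {par : ℕ → ℕ} {x z : ℕ} (h : ancp par (par x) z) : ancp par x z := by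
  obtain ⟨t, ht⟩ := h
  exact ⟨t+1, by rw [Function.iterate_succ_apply]; exact ht⟩

private lemma ancp_cases {par : ℕ → ℕ} {x z : ℕ} (h : ancp par x z) :
    z = x ∨ ancp par (par x) z := by
  obtain ⟨t, ht⟩ := h
  cases t with
  | zero => exact Or.inl ht.symm
  | succ s => exact Or.inr ⟨s, by rw [Function.iterate_succ_apply] at ht; exact ht⟩

private lemma ancp_trans {par : ℕ → ℕ} {x y z : ℕ} (h1 : ancp par x y) (h2 : ancp par y z) :
    ancp par x z := by
  obtain ⟨s, rfl⟩ := h1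
  obtain ⟨t, rfl⟩ := h2
  exact ⟨t + s, (Function.iterate_add_apply par t s x)⟩

private lemma ancp_total {par : ℕ → ℕ} {x z1 z2 : ℕ} (h1 : ancp par x z1) (h2 : ancp par x z2) :
    ancp par z1 z2 ∨ ancp par z2 z1 := by
  obtain ⟨s, rfl⟩ := h1
  obtain ⟨t, rfl⟩ := h2
  rcases le_total s t with h | h
  · left
    exact ⟨t - s, by rw [← Function.iterate_add_apply]; congr 1; omega⟩
  · right
    exact ⟨s - t, by rw [← Function.iterate_add_apply]; congr 1; omega⟩

private lemma ancp_antisymm {par : ℕ → ℕ} (hpar0 : par 0 = 0)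
    (hpar : ∀ i, 0 < i → par i < i) {z1 z2 : ℕ} (h1 : ancp par z1 z2) (h2 : ancp par z2 z1) :
    z1 = z2 :=
  le_antisymm (ancp_le hpar0 hpar h2) (ancp_le hpar0 hpar h1)

private lemma pack_bound {V : Type*} [Fintype V]
    (par : ℕ → ℕ) (hpar0 : par 0 = 0) (hpar : ∀ i, 0 < i → par i < i)
    (m : ℕ) (hm : 0 < m) (f : V → ℕ)
    (d : ℕ) (B : ℕ → Finset V)
    (hBcard : ∀ z, z < m → d + 1 ≤ (B z).card)
    (hBf : ∀ z, z < m → ∀ v ∈ B z, f v = z)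
    (j : ℕ) (hj : 0 < j)
    (hne : (((Finset.Ico 1 m)).filter (fun z =>
        j ≤ (Finset.univ.filter (fun v => ancp par (f v) z)).card ∧
        j ≤ Fintype.card V - (Finset.univ.filter (fun v => ancp par (f v) z)).card)).Nonempty) :
    2*j + ((((Finset.Ico 1 m)).filter (fun z =>
        j ≤ (Finset.univ.filter (fun v => ancp par (f v) z)).card ∧
        j ≤ Fintype.card V - (Finset.univ.filter (fun v => ancp par (f v) z)).card)).card) * (d+1)
      ≤ Fintype.card V + (d+1) := by
  classical
  set n := Fintype.card V with hn
  set X : ℕ → Finset V := fun z => Finset.univ.filter (fun v => ancp par (f v) z) with hX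
  set C : Finset ℕ := (Finset.Ico 1 m).filter (fun z => j ≤ (X z).card ∧ j ≤ n - (X z).card)
    with hC
  have hCmem : ∀ z ∈ C, 1 ≤ z ∧ z < m ∧ j ≤ (X z).card ∧ j ≤ n - (X z).card := by
    intro z hz
    simp only [hC, Finset.mem_filter, Finset.mem_Ico] at hz
    exact ⟨hz.1.1, hz.1.2, hz.2.1, hz.2.2⟩
  set M : ℕ → Finset V := fun z =>
    X z \ (C.filter (fun z' => z' ≠ z ∧ ancp par z' z)).biUnion X with hM
  -- B z ⊆ M z for z ∈ C
  have hBM : ∀ z ∈ C, B z ⊆ M z := by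
    intro z hz v hv
    obtain ⟨hz1, hz2, _, _⟩ := hCmem z hz
    have hfv : f v = z := hBf z hz2 v hv
    refine Finset.mem_sdiff.mpr ⟨?_, ?_⟩
    · simp only [hX, Finset.mem_filter]
      exact ⟨Finset.mem_univ v, by rw [hfv]; exact ancp_refl z⟩
    · intro hmem
      obtain ⟨z', hz', hvz'⟩ := Finset.mem_biUnion.mp hmem
      simp only [Finset.mem_filter] at hz'
      have hvz2 : ancp par (f v) z' := by
        have := Finset.mem_filter.mp hvz'
        simpa [hX] using this.2
      rw [hfv] at hvz2
      exact hz'.2.1 (ancp_antisymm hpar0 hpar hz'.2.2 hvz2)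
  have hMcard : ∀ z ∈ C, d + 1 ≤ (M z).card := by
    intro z hz
    exact le_trans (hBcard z (hCmem z hz).2.1) (Finset.card_le_card (hBM z hz))
  -- pairwise disjoint
  have hMdisj : ∀ z1 ∈ C, ∀ z2 ∈ C, z1 ≠ z2 → Disjoint (M z1) (M z2) := by
    intro z1 h1 z2 h2 hne12
    rw [Finset.disjoint_left]
    intro v hv1 hv2
    have hx1 : v ∈ X z1 := Finset.mem_sdiff.mp hv1 |>.1
    have hx2 : v ∈ X z2 := Finset.mem_sdiff.mp hv2 |>.1
    have ha1 : ancp par (f v) z1 := by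
      simpa [hX] using hx1
    have ha2 : ancp par (f v) z2 := by
      simpa [hX] using hx2
    rcases ancp_total ha1 ha2 with h | h
    · -- z2 ancestor of z1 : z1 strictly below z2, so X z1 excluded from M z2
      have := Finset.mem_sdiff.mp hv2 |>.2
      apply this
      simp only [Finset.mem_biUnion, Finset.mem_filter]
      exact ⟨z1, ⟨h1, hne12, h⟩, hx1⟩
    · have := Finset.mem_sdiff.mp hv1 |>.2
      apply this
      simp only [Finset.mem_biUnion, Finset.mem_filter]
      exact ⟨z2, ⟨h2, fun hh => hne12 hh.symm, h⟩, hx2⟩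
  -- minimal cuts
  set Mn : Finset ℕ := C.filter (fun z => ∀ z' ∈ C, ancp par z' z → z' = z) with hMn
  have hmin_ex : ∀ z ∈ C, ∃ u ∈ Mn, ancp par u z := by
    intro z hz
    -- strong induction on m - z
    have : ∀ b : ℕ, ∀ z ∈ C, m - z ≤ b → ∃ u ∈ Mn, ancp par u z := by
      intro b
      induction b with
      | zero =>
        intro z hz hb
        have := (hCmem z hz).2.1
        omega
      | succ b ih =>
        intro z hz hb
        by_cases hmin : ∀ z' ∈ C, ancp par z' z → z' = z
        · exact ⟨z, by simp only [hMn, Finset.mem_filter]; exact ⟨hz, hmin⟩, ancp_refl z⟩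
        · push_neg at hmin
          obtain ⟨z', hz', hanc, hne'⟩ := hmin
          have hlt : z < z' := by
            have := ancp_le hpar0 hpar hanc
            omega
          have hz'm := (hCmem z' hz').2.1
          obtain ⟨u, hu, huanc⟩ := ih z' hz' (by omega)
          exact ⟨u, hu, ancp_trans huanc hanc⟩
    exact this (m - z) z hz le_rfl
  -- sum helper
  have hsum_le : ∀ R : Finset V, (∀ z ∈ C, Disjoint (M z) R) →
      (∑ z ∈ C, (M z).card) + R.card ≤ n := by
    intro R hR
    have h1 : (C.biUnion M).card = ∑ z ∈ C, (M z).card := Finset.card_biUnion hMdisj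
    have h2 : Disjoint (C.biUnion M) R := by
      rw [Finset.disjoint_left]
      intro v hv hvR
      obtain ⟨z, hz, hvz⟩ := Finset.mem_biUnion.mp hv
      exact (Finset.disjoint_left.mp (hR z hz)) hvz hvR
    calc (∑ z ∈ C, (M z).card) + R.card = (C.biUnion M).card + R.card := by rw [h1]
      _ = ((C.biUnion M) ∪ R).card := (Finset.card_union_of_disjoint h2).symm
      _ ≤ n := Finset.card_le_univ _
  obtain ⟨z0, hz0⟩ := hne
  obtain ⟨u, hu, _⟩ := hmin_ex z0 hz0
  have huC : u ∈ C := (Finset.mem_filter.mp hu).1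
  have huMin : ∀ z' ∈ C, ancp par z' u → z' = u := (Finset.mem_filter.mp hu).2
  have hMu : M u = X u := by
    simp only [hM]
    have : (C.filter (fun z' => z' ≠ u ∧ ancp par z' u)) = ∅ := by
      apply Finset.filter_eq_empty_iff.mpr
      intro z' hz' hcontra
      exact hcontra.1 (huMin z' hz' hcontra.2)
    rw [this]
    simp
  have hMucard : j ≤ (M u).card := by rw [hMu]; exact (hCmem u huC).2.2.1
  by_cases htwo : ∃ v ∈ Mn, v ≠ u
  · -- two minimal cuts
    obtain ⟨v, hv, hvu⟩ := htwo
    have hvC : v ∈ C := (Finset.mem_filter.mp hv).1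
    have hvMin : ∀ z' ∈ C, ancp par z' v → z' = v := (Finset.mem_filter.mp hv).2
    have hMv : M v = X v := by
      simp only [hM]
      have : (C.filter (fun z' => z' ≠ v ∧ ancp par z' v)) = ∅ := by
        apply Finset.filter_eq_empty_iff.mpr
        intro z' hz' hcontra
        exact hcontra.1 (hvMin z' hz' hcontra.2)
      rw [this]
      simp
    have hMvcard : j ≤ (M v).card := by rw [hMv]; exact (hCmem v hvC).2.2.1
    -- R := univ \ biUnion
    set R : Finset V := Finset.univ \ C.biUnion X with hR
    have hRdisj : ∀ z ∈ C, Disjoint (M z) R := by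
      intro z hz
      rw [Finset.disjoint_left]
      intro w hw hwR
      simp only [hR, Finset.mem_sdiff, Finset.mem_biUnion] at hwR
      exact hwR.2 ⟨z, hz, (Finset.mem_sdiff.mp hw).1⟩
    have hRcard : d + 1 ≤ R.card := by
      refine le_trans (hBcard 0 hm) (Finset.card_le_card ?_)
      intro w hw
      simp only [hR, Finset.mem_sdiff, Finset.mem_biUnion, Finset.mem_univ, true_and]
      rintro ⟨z, hz, hwz⟩
      have hfw : f w = 0 := hBf 0 hm w hw
      have : ancp par (f w) z := by simpa [hX] using hwz
      rw [hfw] at this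
      have := ancp_le hpar0 hpar this
      have := (hCmem z hz).1
      omega
    -- sum split
    have hsplit : ∑ z ∈ C, (M z).card
        ≥ j + j + (C.card - 2) * (d+1) := by
      have h1 : ∑ z ∈ C, (M z).card
          = (M u).card + ∑ z ∈ C.erase u, (M z).card := by
        rw [← Finset.sum_erase_add C _ huC]; ring
      have hvCe : v ∈ C.erase u := Finset.mem_erase.mpr ⟨hvu, hvC⟩
      have h2 : ∑ z ∈ C.erase u, (M z).card
          = (M v).card + ∑ z ∈ (C.erase u).erase v, (M z).card := by
        rw [← Finset.sum_erase_add _ _ hvCe]; ring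
      have h3 : ((C.erase u).erase v).card * (d+1) ≤ ∑ z ∈ (C.erase u).erase v, (M z).card := by
        rw [← Finset.sum_const_nat (m := d+1) (fun x hx => rfl)]
        apply Finset.sum_le_sum
        intro z hz
        exact hMcard z (Finset.mem_of_mem_erase (Finset.mem_of_mem_erase hz))
      have h4 : ((C.erase u).erase v).card = C.card - 2 := by
        rw [Finset.card_erase_of_mem hvCe, Finset.card_erase_of_mem huC]
        omega
      have h5 : ((C.erase u).erase v).card * (d+1) = (C.card - 2) * (d+1) := by rw [h4]
      have h6 : (C.card - 2) * (d+1) = C.card * (d+1) - 2*(d+1) := Nat.sub_mul _ _ _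
      have hc2' : v ∈ C.erase u := hvCe
      omega
    have hsum := hsum_le R hRdisj
    have hc2 : 2 ≤ C.card := by
      have : ({u, v} : Finset ℕ) ⊆ C := by
        intro x hx
        simp only [Finset.mem_insert, Finset.mem_singleton] at hx
        rcases hx with rfl | rfl
        · exact huC
        · exact hvC
      have hcard2 : ({u, v} : Finset ℕ).card = 2 := by
        rw [Finset.card_insert_of_notMem (by simpa using hvu.symm), Finset.card_singleton]
      calc 2 = ({u, v} : Finset ℕ).card := hcard2.symm
        _ ≤ C.card := Finset.card_le_card this
    have hQ : (C.card - 2) * (d+1) = C.card * (d+1) - 2*(d+1) := Nat.sub_mul _ _ _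
    have hge : 2*(d+1) ≤ C.card * (d+1) := Nat.mul_le_mul_right _ hc2
    omega
  · -- unique minimal cut: chain case
    push_neg at htwo
    have huAll : ∀ z ∈ C, ancp par u z := by
      intro z hz
      obtain ⟨u', hu', hanc⟩ := hmin_ex z hz
      rwa [htwo u' hu'] at hanc
    have hCne : C.Nonempty := ⟨z0, hz0⟩
    set T : ℕ := C.min' hCne with hT
    have hTC : T ∈ C := Finset.min'_mem C hCne
    have hTanc : ∀ z ∈ C, ancp par z T := by
      intro z hz
      rcases ancp_total (huAll z hz) (huAll T hTC) with h | h
      · exact h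
      · have h1 := ancp_le hpar0 hpar h
        have h2 : T ≤ z := Finset.min'_le C z hz
        have : z = T := by omega
        subst this
        exact ancp_refl T
    have hXT : ∀ z ∈ C, X z ⊆ X T := by
      intro z hz w hw
      simp only [hX, Finset.mem_filter, Finset.mem_univ, true_and] at hw ⊢
      exact ancp_trans hw (hTanc z hz)
    set R : Finset V := Finset.univ \ X T with hR
    have hRdisj : ∀ z ∈ C, Disjoint (M z) R := by
      intro z hz
      rw [Finset.disjoint_left]
      intro w hw hwR
      simp only [hR, Finset.mem_sdiff] at hwR
      exact hwR.2 (hXT z hz (Finset.mem_sdiff.mp hw).1)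
    have hRcard : j ≤ R.card := by
      have h1 : R.card = n - (X T).card := by
        simp only [hR]
        rw [Finset.card_sdiff_of_subset (Finset.subset_univ _), Finset.card_univ]
      rw [h1]
      exact (hCmem T hTC).2.2.2
    have hsplit : ∑ z ∈ C, (M z).card ≥ j + (C.card - 1) * (d+1) := by
      have h1 : ∑ z ∈ C, (M z).card = (M u).card + ∑ z ∈ C.erase u, (M z).card := by
        rw [← Finset.sum_erase_add C _ huC]; ring
      have h3 : (C.erase u).card * (d+1) ≤ ∑ z ∈ C.erase u, (M z).card := by
        rw [← Finset.sum_const_nat (m := d+1) (fun x hx => rfl)]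
        apply Finset.sum_le_sum
        intro z hz
        exact hMcard z (Finset.mem_of_mem_erase hz)
      have h4 : (C.erase u).card = C.card - 1 := Finset.card_erase_of_mem huC
      have h5 : (C.erase u).card * (d+1) = (C.card - 1) * (d+1) := by rw [h4]
      omega
    have hsum := hsum_le R hRdisj
    have hc1 : 1 ≤ C.card := Finset.card_pos.mpr hCne
    have hQ : (C.card - 1) * (d+1) = C.card * (d+1) - 1*(d+1) := Nat.sub_mul _ _ _
    have hge : 1*(d+1) ≤ C.card * (d+1) := Nat.mul_le_mul_right _ hc1
    omega

noncomputable def walkB {V : Type*} (G : SimpleGraph V) (vert : ℕ → V) (par : ℕ → ℕ)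
    (hpar : ∀ i, 0 < i → par i < i)
    (legs : (i : ℕ) → G.Walk (vert i) (vert (par i))) : (x : ℕ) → (y : ℕ) → G.Walk (vert x) (vert y)
  | x, y =>
    if h : x = y then (SimpleGraph.Walk.nil).copy rfl (congrArg vert h)
    else if hxy : y < x then
      ((legs x).append (walkB G vert par hpar legs (par x) y))
    else (walkB G vert par hpar legs x (par y)).append (legs y).reverse
termination_by x y => x + y
decreasing_by
  · have : par x < x := hpar x (by omega)
    omega
  · have : par y < y := hpar y (by omega)
    omega

lemma walkB_edges {V : Type*} (G : SimpleGraph V) (vert : ℕ → V) (par : ℕ → ℕ)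
    (hpar0 : par 0 = 0) (hpar : ∀ i, 0 < i → par i < i)
    (legs : (i : ℕ) → G.Walk (vert i) (vert (par i))) (x y : ℕ) :
    ∀ e ∈ (walkB G vert par hpar legs x y).edges, ∃ z, 0 < z ∧ z ≤ max x y ∧
      ((ancp par x z ∧ ¬ ancp par y z) ∨ (ancp par y z ∧ ¬ ancp par x z)) ∧
      e ∈ (legs z).edges := by
  have main : ∀ N x y, x + y ≤ N → ∀ e ∈ (walkB G vert par hpar legs x y).edges,
      ∃ z, 0 < z ∧ z ≤ max x y ∧
      ((ancp par x z ∧ ¬ ancp par y z) ∨ (ancp par y z ∧ ¬ ancp par x z)) ∧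
      e ∈ (legs z).edges := by
    intro N
    induction N with
    | zero =>
      intro x y hxy e he
      have hx : x = 0 := by omega
      have hy : y = 0 := by omega
      subst hx; subst hy
      rw [walkB] at he
      simp at he
    | succ N ih =>
      intro x y hxy e he
      rw [walkB] at he
      by_cases h : x = y
      · simp only [h, dif_pos] at he
        rw [SimpleGraph.Walk.edges_copy] at he
        simp at he
      · simp only [h, dif_neg, not_false_iff] at he
        by_cases hxy2 : y < x
        · simp only [hxy2, dif_pos] at he
          rw [SimpleGraph.Walk.edges_append, List.mem_append] at he
          rcases he with he | he
          · refine ⟨x, by omega, by omega, Or.inl ⟨ancp_refl x, ?_⟩, he⟩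
            intro hc
            have := ancp_le hpar0 hpar hc
            omega
          · have hpx : par x < x := hpar x (by omega)
            obtain ⟨z, hz1, hz2, hz3, hz4⟩ := ih (par x) y (by omega) e he
            refine ⟨z, hz1, by omega, ?_, hz4⟩
            rcases hz3 with ⟨ha, hb⟩ | ⟨ha, hb⟩
            · exact Or.inl ⟨ancp_step ha, hb⟩
            · refine Or.inr ⟨ha, ?_⟩
              intro hc
              rcases ancp_cases hc with rfl | hc2
              · have := ancp_le hpar0 hpar ha
                omega
              · exact hb hc2
        · have hyx : x < y := by omega
          simp only [hxy2, dif_neg, not_false_iff] at he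
          rw [SimpleGraph.Walk.edges_append, List.mem_append] at he
          rcases he with he | he
          · have hpy : par y < y := hpar y (by omega)
            obtain ⟨z, hz1, hz2, hz3, hz4⟩ := ih x (par y) (by omega) e he
            refine ⟨z, hz1, by omega, ?_, hz4⟩
            rcases hz3 with ⟨ha, hb⟩ | ⟨ha, hb⟩
            · refine Or.inl ⟨ha, ?_⟩
              intro hc
              rcases ancp_cases hc with rfl | hc2
              · have := ancp_le hpar0 hpar ha
                omega
              · exact hb hc2
            · exact Or.inr ⟨ancp_step ha, hb⟩
          · rw [SimpleGraph.Walk.edges_reverse, List.mem_reverse] at he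
            refine ⟨y, by omega, by omega, Or.inr ⟨ancp_refl y, ?_⟩, he⟩
            intro hc
            have := ancp_le hpar0 hpar hc
            omega
  exact main (x + y) x y le_rfl

private lemma steiner_bound {V : Type*} [Fintype V] (G : SimpleGraph V)
    (m : ℕ) (vert : ℕ → V) (par : ℕ → ℕ)
    (hpar0 : par 0 = 0) (hpar : ∀ i, 0 < i → par i < i)
    (legs : (i : ℕ) → G.Walk (vert i) (vert (par i)))
    (hlegs : ∀ i, 0 < i → i < m → (legs i).length ≤ 3)
    (f : V → ℕ) (hf : ∀ v, f v < m)
    (dw : (v : V) → G.Walk v (vert (f v))) (hdw : ∀ v, (dw v).length ≤ 2)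
    (S : Finset V) (hS : S.Nonempty) :
    steinerDist G S ≤ 2 * S.card + 3 * ((Finset.Ico 1 m).filter (fun z =>
      (∃ v ∈ S, ancp par (f v) z) ∧ (∃ v ∈ S, ¬ ancp par (f v) z))).card := by
  classical
  set v0 : V := hS.choose with hv0
  have hv0S : v0 ∈ S := hS.choose_spec
  set t : (v : V) → G.Walk v0 v := fun v =>
    (dw v0).append ((walkB G vert par hpar legs (f v0) (f v)).append (dw v).reverse) with ht
  set sp : (v : V) → G.Walk v0 v0 := fun v => (t v).append (t v).reverse with hsp
  set tourF : List V → G.Walk v0 v0 := fun l =>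
    (l.map sp).foldr (fun w acc => w.append acc) SimpleGraph.Walk.nil with htour
  set W : G.Walk v0 v0 := tourF S.toList with hW
  -- support
  have hsupp : ∀ (l : List V), ∀ v ∈ l, v ∈ (tourF l).support := by
    intro l
    induction l with
    | nil => intro v hv; simp at hv
    | cons a l ih =>
      intro v hv
      simp only [htour, List.map_cons, List.foldr_cons]
      rw [SimpleGraph.Walk.mem_support_append_iff]
      rcases List.mem_cons.mp hv with rfl | hv
      · left
        simp only [hsp]
        rw [SimpleGraph.Walk.mem_support_append_iff]
        left
        exact SimpleGraph.Walk.end_mem_support _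
      · right
        exact ih v hv
  -- edges
  have hedges : ∀ (l : List V), ∀ e ∈ (tourF l).edges, ∃ v ∈ l, e ∈ (t v).edges := by
    intro l
    induction l with
    | nil => intro e he; simp [htour] at he
    | cons a l ih =>
      intro e he
      simp only [htour, List.map_cons, List.foldr_cons] at he
      rw [SimpleGraph.Walk.edges_append, List.mem_append] at he
      rcases he with he | he
      · simp only [hsp] at he
        rw [SimpleGraph.Walk.edges_append, List.mem_append] at he
        refine ⟨a, List.mem_cons_self, ?_⟩
        rcases he with he | he
        · exact he
        · rwa [SimpleGraph.Walk.edges_reverse, List.mem_reverse] at he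
      · obtain ⟨v, hv, hev⟩ := ih e he
        exact ⟨v, List.mem_cons_of_mem a hv, hev⟩
  set sep : Finset ℕ := (Finset.Ico 1 m).filter (fun z =>
      (∃ v ∈ S, ancp par (f v) z) ∧ (∃ v ∈ S, ¬ ancp par (f v) z)) with hsep
  set ED : Finset (Sym2 V) := S.biUnion (fun v => (dw v).edges.toFinset) with hED
  set ET : Finset (Sym2 V) := sep.biUnion (fun z => (legs z).edges.toFinset) with hET
  have hsub : W.edges.toFinset ⊆ ED ∪ ET := by
    intro e he
    rw [List.mem_toFinset] at he
    obtain ⟨v, hv, hev⟩ := hedges S.toList e he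
    have hvS : v ∈ S := Finset.mem_toList.mp hv
    simp only [ht] at hev
    rw [SimpleGraph.Walk.edges_append, List.mem_append] at hev
    rcases hev with hev | hev
    · apply Finset.mem_union_left
      exact Finset.mem_biUnion.mpr ⟨v0, hv0S, List.mem_toFinset.mpr hev⟩
    · rw [SimpleGraph.Walk.edges_append, List.mem_append] at hev
      rcases hev with hev | hev
      · obtain ⟨z, hz1, hz2, hz3, hz4⟩ :=
          walkB_edges G vert par hpar0 hpar legs (f v0) (f v) e hev
        apply Finset.mem_union_right
        apply Finset.mem_biUnion.mpr
        refine ⟨z, ?_, List.mem_toFinset.mpr hz4⟩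
        simp only [hsep, Finset.mem_filter, Finset.mem_Ico]
        have hzm : z < m := by
          have h1 := hf v0
          have h2 := hf v
          omega
        refine ⟨⟨hz1, hzm⟩, ?_⟩
        rcases hz3 with ⟨ha, hb⟩ | ⟨ha, hb⟩
        · exact ⟨⟨v0, hv0S, ha⟩, ⟨v, hvS, hb⟩⟩
        · exact ⟨⟨v, hvS, ha⟩, ⟨v0, hv0S, hb⟩⟩
      · apply Finset.mem_union_left
        rw [SimpleGraph.Walk.edges_reverse, List.mem_reverse] at hev
        exact Finset.mem_biUnion.mpr ⟨v, hvS, List.mem_toFinset.mpr hev⟩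
  -- steinerDist ≤ card of W.edges.toFinset
  have hsd : steinerDist G S ≤ W.edges.toFinset.card := by
    apply Nat.sInf_le
    refine ⟨W.toSubgraph, W.toSubgraph_connected, ?_, ?_⟩
    · intro v hv
      rw [SimpleGraph.Walk.mem_verts_toSubgraph]
      exact hsupp S.toList v (Finset.mem_toList.mpr hv)
    · have : W.toSubgraph.edgeSet = ↑(W.edges.toFinset) := by
        rw [SimpleGraph.Walk.edgeSet_toSubgraph]
        ext e
        simp
      rw [this, Set.ncard_coe_finset]
  -- card bounds
  have hEDcard : ED.card ≤ 2 * S.card := by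
    refine le_trans (Finset.card_biUnion_le) ?_
    calc ∑ v ∈ S, (dw v).edges.toFinset.card ≤ ∑ v ∈ S, 2 := by
          apply Finset.sum_le_sum
          intro v _
          calc (dw v).edges.toFinset.card ≤ (dw v).edges.length := (dw v).edges.toFinset_card_le
            _ = (dw v).length := SimpleGraph.Walk.length_edges _
            _ ≤ 2 := hdw v
      _ = 2 * S.card := by rw [Finset.sum_const, smul_eq_mul, mul_comm]
  have hETcard : ET.card ≤ 3 * sep.card := by
    refine le_trans (Finset.card_biUnion_le) ?_
    calc ∑ z ∈ sep, (legs z).edges.toFinset.card ≤ ∑ z ∈ sep, 3 := by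
          apply Finset.sum_le_sum
          intro z hz
          simp only [hsep, Finset.mem_filter, Finset.mem_Ico] at hz
          calc (legs z).edges.toFinset.card ≤ (legs z).edges.length :=
                (legs z).edges.toFinset_card_le
            _ = (legs z).length := SimpleGraph.Walk.length_edges _
            _ ≤ 3 := hlegs z hz.1.1 hz.1.2
      _ = 3 * sep.card := by rw [Finset.sum_const, smul_eq_mul, mul_comm]
  calc steinerDist G S ≤ W.edges.toFinset.card := hsd
    _ ≤ (ED ∪ ET).card := Finset.card_le_card hsub
    _ ≤ ED.card + ET.card := Finset.card_union_le _ _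
    _ ≤ 2 * S.card + 3 * sep.card := by omega

private lemma reach3 {V : Type*} (G : SimpleGraph V) (hG : G.Connected) (P : V → Prop) :
    ∀ d : ℕ, ∀ v : V, (∀ a, P a → 3 ≤ G.dist v a) → (∃ a, P a ∧ G.dist v a ≤ d) →
      ∃ u, (∀ a, P a → 3 ≤ G.dist u a) ∧ (∃ a, P a ∧ G.dist u a ≤ 3) := by
  intro d
  induction d with
  | zero =>
    intro v h1 h2
    obtain ⟨a, ha, hd⟩ := h2
    have := h1 a ha
    omega
  | succ d ih =>
    intro v h1 h2
    by_cases hd3 : d + 1 ≤ 3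
    · obtain ⟨a, ha, hda⟩ := h2
      exact ⟨v, h1, a, ha, by omega⟩
    · by_cases hex : ∃ a, P a ∧ G.dist v a ≤ d
      · exact ih v h1 hex
      · push_neg at hex
        obtain ⟨a0, ha0, hda0⟩ := h2
        have hda0' : G.dist v a0 = d + 1 := le_antisymm hda0 (hex a0 ha0)
        obtain ⟨p, hp⟩ := hG.exists_walk_length_eq_dist v a0
        cases p with
        | nil =>
          rw [SimpleGraph.Walk.length_nil] at hp
          omega
        | @cons _ u' _ hadj q =>
          rw [SimpleGraph.Walk.length_cons, hda0'] at hp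
          have hq : q.length = d := by omega
          have hdu' : G.dist u' a0 ≤ d := hq ▸ SimpleGraph.dist_le q
          have hvu' : G.dist v u' ≤ 1 := by
            have := SimpleGraph.dist_le (SimpleGraph.Walk.cons hadj SimpleGraph.Walk.nil)
            simpa using this
          apply ih u' ?_ ⟨a0, ha0, by omega⟩
          intro a ha
          have htri := hG.dist_triangle (u := v) (v := u') (w := a)
          have h4 := hex a ha
          omega

private lemma exists_structure {V : Type*} [Fintype V] (G : SimpleGraph V) (hG : G.Connected)
    (hne : Nonempty V) :
    ∃ (m : ℕ) (vert : ℕ → V) (par : ℕ → ℕ) (f : V → ℕ),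
      0 < m ∧ par 0 = 0 ∧ (∀ i, 0 < i → par i < i) ∧
      (∀ i, 0 < i → i < m → G.dist (vert i) (vert (par i)) ≤ 3) ∧
      (∀ i j, i < m → j < m → i ≠ j → 3 ≤ G.dist (vert i) (vert j)) ∧
      (∀ v, f v < m) ∧ (∀ v, G.dist v (vert (f v)) ≤ 2) ∧
      (∀ v i, i < m → G.dist v (vert i) ≤ 1 → f v = i) := by
  classical
  obtain ⟨v0⟩ := hne
  set valid : List V → Prop := fun l =>
    0 < l.length ∧
    (∀ i j, i < l.length → j < l.length → i ≠ j →
      3 ≤ G.dist (l.getD i v0) (l.getD j v0)) ∧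
    (∀ i, 0 < i → i < l.length → ∃ jj, jj < i ∧
      G.dist (l.getD i v0) (l.getD jj v0) ≤ 3) with hvalid
  set Q : ℕ → Prop := fun r => ∃ l, valid l ∧ l.length = r with hQ
  have hQ1 : Q 1 := by
    refine ⟨[v0], ⟨by simp, ?_, ?_⟩, by simp⟩
    · intro i j hi hj hij
      simp only [List.length_singleton] at hi hj
      omega
    · intro i hi hi2
      simp only [List.length_singleton] at hi2
      omega
  have hbound : ∀ l, valid l → l.length ≤ Fintype.card V := by
    intro l hl
    have hinj : Function.Injective (fun i : Fin l.length => l.getD i v0) := by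
      intro i j hij
      simp only at hij
      by_contra hij2
      have hne2 : (i:ℕ) ≠ (j:ℕ) := fun h => hij2 (Fin.ext h)
      have := hl.2.1 i j i.isLt j.isLt hne2
      rw [hij] at this
      rw [SimpleGraph.dist_self] at this
      omega
    calc l.length = Fintype.card (Fin l.length) := (Fintype.card_fin _).symm
      _ ≤ Fintype.card V := Fintype.card_le_of_injective _ hinj
  have hcard1 : 1 ≤ Fintype.card V := Fintype.card_pos_iff.mpr ⟨v0⟩
  set r : ℕ := Nat.findGreatest Q (Fintype.card V) with hr
  have hQr : Q r := Nat.findGreatest_spec hcard1 hQ1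
  obtain ⟨l, hl, hlen⟩ := hQr
  -- coverage
  have hcover : ∀ v : V, ∃ i, i < r ∧ G.dist v (l.getD i v0) ≤ 2 := by
    by_contra hcon
    push_neg at hcon
    obtain ⟨v, hv⟩ := hcon
    -- v is at distance ≥ 3 from all entries
    have hfar : ∀ a, (∃ i, i < r ∧ l.getD i v0 = a) → 3 ≤ G.dist v a := by
      rintro a ⟨i, hi, rfl⟩
      have := hv i hi
      omega
    have hex : ∃ a, (∃ i, i < r ∧ l.getD i v0 = a) ∧ G.dist v a ≤ G.dist v (l.getD 0 v0) := by
      refine ⟨l.getD 0 v0, ⟨0, ?_, rfl⟩, le_refl _⟩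
      have := hl.1
      omega
    obtain ⟨u, hu1, hu2⟩ := reach3 G hG _ (G.dist v (l.getD 0 v0)) v hfar hex
    -- extend the list
    set l' : List V := l ++ [u] with hl'
    have hlen' : l'.length = r + 1 := by simp [hl', hlen]
    have hgetold : ∀ i, i < r → l'.getD i v0 = l.getD i v0 := by
      intro i hi
      simp only [hl']
      rw [List.getD_append _ _ _ _ (by omega : i < l.length)]
    have hgetnew : l'.getD r v0 = u := by
      simp only [hl']
      rw [List.getD_append_right _ _ _ _ (by omega : l.length ≤ r)]
      simp [hlen]
    have hvalid' : valid l' := by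
      refine ⟨by omega, ?_, ?_⟩
      · intro i j hi hj hij
        rw [hlen'] at hi hj
        rcases Nat.lt_or_ge i r with hir | hir
        · rcases Nat.lt_or_ge j r with hjr | hjr
          · rw [hgetold i hir, hgetold j hjr]
            exact hl.2.1 i j (by omega) (by omega) hij
          · have hj2 : j = r := by omega
            subst hj2
            rw [hgetold i hir, hgetnew]
            rw [SimpleGraph.dist_comm]
            exact hu1 _ ⟨i, hir, rfl⟩
        · have hi2 : i = r := by omega
          subst hi2
          have hjr : j < r := by omega
          rw [hgetold j hjr, hgetnew]
          exact hu1 _ ⟨j, hjr, rfl⟩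
      · intro i hi0 hi
        rw [hlen'] at hi
        rcases Nat.lt_or_ge i r with hir | hir
        · obtain ⟨jj, hjj, hd⟩ := hl.2.2 i hi0 (by omega)
          exact ⟨jj, hjj, by rw [hgetold i hir, hgetold jj (by omega)]; exact hd⟩
        · have hi2 : i = r := by omega
          subst hi2
          obtain ⟨a, ⟨j, hj, rfl⟩, hd⟩ := hu2
          refine ⟨j, by omega, ?_⟩
          rw [hgetnew, hgetold j hj]
          exact hd
    have hQr1 : Q (r + 1) := ⟨l', hvalid', hlen'⟩
    have hler : r + 1 ≤ Fintype.card V := by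
      have := hbound l' hvalid'
      omega
    exact Nat.findGreatest_is_greatest (by omega) hler hQr1
  -- build the data
  set m := r with hm
  set vert : ℕ → V := fun i => l.getD i v0 with hvert
  have hm0 : 0 < m := by
    have := hl.1
    omega
  set par : ℕ → ℕ := fun i =>
    if h : 0 < i ∧ i < m then Classical.choose (hl.2.2 i h.1 (by omega : i < l.length))
    else if i = 0 then 0 else i - 1 with hpar
  have hpar0 : par 0 = 0 := by simp [hpar]
  have hparlt : ∀ i, 0 < i → par i < i := by
    intro i hi
    simp only [hpar]
    split
    · next h =>
      have := (Classical.choose_spec (hl.2.2 i h.1 (by omega : i < l.length))).1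
      omega
    · simp only [if_neg (by omega : ¬ i = 0)]
      omega
  have hpardist : ∀ i, 0 < i → i < m → G.dist (vert i) (vert (par i)) ≤ 3 := by
    intro i hi him
    simp only [hpar, dif_pos (⟨hi, him⟩ : 0 < i ∧ i < m)]
    exact (Classical.choose_spec (hl.2.2 i hi (by omega : i < l.length))).2
  have hfar : ∀ i j, i < m → j < m → i ≠ j → 3 ≤ G.dist (vert i) (vert j) := by
    intro i j hi hj hij
    exact hl.2.1 i j (by omega) (by omega) hij
  set f : V → ℕ := fun v =>
    if h : ∃ i, i < m ∧ G.dist v (vert i) ≤ 1 then Classical.choose h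
    else Classical.choose (hcover v) with hf
  have hfm : ∀ v, f v < m := by
    intro v
    simp only [hf]
    split
    · next h => exact (Classical.choose_spec h).1
    · exact (Classical.choose_spec (hcover v)).1
  have hfdist : ∀ v, G.dist v (vert (f v)) ≤ 2 := by
    intro v
    simp only [hf]
    split
    · next h =>
      have := (Classical.choose_spec h).2
      omega
    · exact (Classical.choose_spec (hcover v)).2
  have hfnear : ∀ v i, i < m → G.dist v (vert i) ≤ 1 → f v = i := by
    intro v i him hdi
    have hex : ∃ i, i < m ∧ G.dist v (vert i) ≤ 1 := ⟨i, him, hdi⟩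
    simp only [hf, dif_pos hex]
    have hspec := hex.choose_spec
    by_contra hji
    have h3 := hfar hex.choose i hspec.1 him hji
    have htri := hG.dist_triangle (u := vert hex.choose) (v := v) (w := vert i)
    rw [SimpleGraph.dist_comm (u := vert hex.choose) (v := v)] at htri
    have h5 := hspec.2
    omega
  exact ⟨m, vert, par, f, hm0, hpar0, hparlt, hpardist, hfar, hfm, hfdist, hfnear⟩

/-- for connected G of order n, minimum degree δ and 2 ≤ k ≤ n,
SW_k(G) ≤ ((k-1)/(k+1))(3(n+1)/(δ+1))·C(n,k) + (3δ/(δ+1)+2k)·C(n,k), and hence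
μ_k(G) = SW_k(G)/C(n,k) ≤ ((k-1)/(k+1))(3(n+1)/(δ+1)) + 3δ/(δ+1) + 2k. -/
theorem steiner_wiener_min_degree {V : Type*} [Fintype V]
    (G : SimpleGraph V) (hG : G.Connected) (k : ℕ) (hk2 : 2 ≤ k)
    (hkn : k ≤ Fintype.card V) :
    (swk k G : ℚ) ≤
      ((k : ℚ) - 1) / ((k : ℚ) + 1) * (3 * ((Fintype.card V : ℚ) + 1) / ((G.minDegree : ℚ) + 1)) *
          Nat.choose (Fintype.card V) k +
        (3 * (G.minDegree : ℚ) / ((G.minDegree : ℚ) + 1) + 2 * k) *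
          Nat.choose (Fintype.card V) k ∧
    (swk k G : ℚ) / Nat.choose (Fintype.card V) k ≤
      ((k : ℚ) - 1) / ((k : ℚ) + 1) * (3 * ((Fintype.card V : ℚ) + 1) / ((G.minDegree : ℚ) + 1)) +
        3 * (G.minDegree : ℚ) / ((G.minDegree : ℚ) + 1) + 2 * k := by
  classical
  set n := Fintype.card V with hn
  set δ := G.minDegree with hδ
  have hnV : Nonempty V := by
    rw [← Fintype.card_pos_iff]
    omega
  obtain ⟨m, vert, par, f, hm0, hpar0, hparlt, hpardist, hfar, hfm, hfdist, hfnear⟩ :=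
    exists_structure G hG hnV
  -- walks
  set legs : (i : ℕ) → G.Walk (vert i) (vert (par i)) := fun i =>
    Classical.choose (hG.exists_walk_length_eq_dist (vert i) (vert (par i))) with hlegsdef
  have hlegs : ∀ i, 0 < i → i < m → (legs i).length ≤ 3 := by
    intro i h1 h2
    have := Classical.choose_spec (hG.exists_walk_length_eq_dist (vert i) (vert (par i)))
    rw [hlegsdef]
    rw [this]
    exact hpardist i h1 h2
  set dw : (v : V) → G.Walk v (vert (f v)) := fun v =>
    Classical.choose (hG.exists_walk_length_eq_dist v (vert (f v))) with hdwdef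
  have hdw : ∀ v, (dw v).length ≤ 2 := by
    intro v
    have := Classical.choose_spec (hG.exists_walk_length_eq_dist v (vert (f v)))
    rw [hdwdef, this]
    exact hfdist v
  -- the X sets and weights
  set X : ℕ → Finset V := fun z => Finset.univ.filter (fun v => ancp par (f v) z) with hX
  set Wt : ℕ → ℕ := fun z => (X z).card with hWt
  set A : Finset (Finset V) := Finset.powersetCard k (Finset.univ : Finset V) with hA
  have hAcard : A.card = n.choose k := by
    rw [hA, Finset.card_powersetCard, Finset.card_univ]
  -- counting identity per z
  have hz_id : ∀ z, (A.filter (fun S => (∃ v ∈ S, ancp par (f v) z) ∧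
        (∃ v ∈ S, ¬ ancp par (f v) z))).card + (Wt z).choose k + (n - Wt z).choose k
      = n.choose k := by
    intro z
    have h1 : A.filter (fun S => S ⊆ X z) = Finset.powersetCard k (X z) := by
      ext S
      simp only [hA, Finset.mem_filter, Finset.mem_powersetCard]
      constructor
      · rintro ⟨⟨-, hk⟩, hs⟩; exact ⟨hs, hk⟩
      · rintro ⟨hs, hk⟩; exact ⟨⟨Finset.subset_univ S, hk⟩, hs⟩
    have h2 : A.filter (fun S => S ⊆ Finset.univ \ X z)
        = Finset.powersetCard k (Finset.univ \ X z) := by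
      ext S
      simp only [hA, Finset.mem_filter, Finset.mem_powersetCard]
      constructor
      · rintro ⟨⟨-, hk⟩, hs⟩; exact ⟨hs, hk⟩
      · rintro ⟨hs, hk⟩; exact ⟨⟨Finset.subset_univ S, hk⟩, hs⟩
    have hsplit := Finset.card_filter_add_card_filter_not
      (s := A) (p := fun S => (∃ v ∈ S, ancp par (f v) z) ∧ (∃ v ∈ S, ¬ ancp par (f v) z))
    have hnotf : A.filter (fun S => ¬ ((∃ v ∈ S, ancp par (f v) z) ∧
        (∃ v ∈ S, ¬ ancp par (f v) z)))
        = A.filter (fun S => S ⊆ X z) ∪ A.filter (fun S => S ⊆ Finset.univ \ X z) := by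
      ext S
      simp only [Finset.mem_filter, Finset.mem_union]
      constructor
      · rintro ⟨hSA, hnq⟩
        by_cases hall : ∀ v ∈ S, ancp par (f v) z
        · left
          refine ⟨hSA, fun v hv => ?_⟩
          simp only [hX, Finset.mem_filter]
          exact ⟨Finset.mem_univ v, hall v hv⟩
        · push_neg at hall
          obtain ⟨w, hwS, hwnot⟩ := hall
          right
          refine ⟨hSA, fun v hv => ?_⟩
          simp only [Finset.mem_sdiff, hX, Finset.mem_filter, Finset.mem_univ, true_and]
          intro hc
          exact hnq ⟨⟨v, hv, hc⟩, ⟨w, hwS, hwnot⟩⟩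
      · rintro (⟨hSA, hsub⟩ | ⟨hSA, hsub⟩)
        · refine ⟨hSA, ?_⟩
          rintro ⟨-, ⟨v, hvS, hvnot⟩⟩
          have := hsub hvS
          simp only [hX, Finset.mem_filter] at this
          exact hvnot this.2
        · refine ⟨hSA, ?_⟩
          rintro ⟨⟨v, hvS, hv⟩, -⟩
          have := hsub hvS
          simp only [Finset.mem_sdiff, hX, Finset.mem_filter, Finset.mem_univ, true_and] at this
          exact this hv
    have hdisjf : Disjoint (A.filter (fun S => S ⊆ X z))
        (A.filter (fun S => S ⊆ Finset.univ \ X z)) := by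
      rw [Finset.disjoint_left]
      intro S hS1 hS2
      simp only [Finset.mem_filter, hA, Finset.mem_powersetCard_univ] at hS1 hS2
      have hSne : S.Nonempty := by
        rw [← Finset.card_pos, hS1.1]
        omega
      obtain ⟨v, hv⟩ := hSne
      have := hS1.2 hv
      have h2 := hS2.2 hv
      simp only [Finset.mem_sdiff] at h2
      exact h2.2 this
    have hcardu : (A.filter (fun S => S ⊆ X z) ∪ A.filter (fun S => S ⊆ Finset.univ \ X z)).card
        = (Wt z).choose k + (n - Wt z).choose k := by
      rw [Finset.card_union_of_disjoint hdisjf, h1, h2, Finset.card_powersetCard,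
        Finset.card_powersetCard, Finset.card_sdiff_of_subset (Finset.subset_univ _), Finset.card_univ]
    rw [← hAcard, ← hsplit, hnotf, hcardu]
    omega
  -- swap sum
  have hswap : ∑ S ∈ A, ((Finset.Ico 1 m).filter (fun z =>
        (∃ v ∈ S, ancp par (f v) z) ∧ (∃ v ∈ S, ¬ ancp par (f v) z))).card
      = ∑ z ∈ Finset.Ico 1 m, (A.filter (fun S => (∃ v ∈ S, ancp par (f v) z) ∧
        (∃ v ∈ S, ¬ ancp par (f v) z))).card := by
    simp_rw [Finset.card_filter]
    exact Finset.sum_comm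
  -- total Nat bound
  have htotal : swk k G ≤ 2*k*(n.choose k)
      + 3 * ∑ z ∈ Finset.Ico 1 m, (A.filter (fun S => (∃ v ∈ S, ancp par (f v) z) ∧
        (∃ v ∈ S, ¬ ancp par (f v) z))).card := by
    rw [← hswap]
    calc swk k G ≤ ∑ S ∈ A, (2 * S.card + 3 * ((Finset.Ico 1 m).filter (fun z =>
          (∃ v ∈ S, ancp par (f v) z) ∧ (∃ v ∈ S, ¬ ancp par (f v) z))).card) := by
          apply Finset.sum_le_sum
          intro S hS
          have hScard : S.card = k := Finset.mem_powersetCard_univ.mp hS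
          have hSne : S.Nonempty := by
            rw [← Finset.card_pos, hScard]; omega
          exact steiner_bound G m vert par hpar0 hparlt legs hlegs f hfm dw hdw S hSne
      _ = 2*k*(n.choose k) + 3 * ∑ S ∈ A, ((Finset.Ico 1 m).filter (fun z =>
          (∃ v ∈ S, ancp par (f v) z) ∧ (∃ v ∈ S, ¬ ancp par (f v) z))).card := by
          have hconst : ∀ S ∈ A, 2 * S.card = 2 * k := by
            intro S hS
            rw [Finset.mem_powersetCard_univ.mp hS]
          rw [Finset.sum_add_distrib]
          congr 1
          · rw [Finset.sum_congr rfl hconst, Finset.sum_const, hAcard, smul_eq_mul]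
            ring
          · exact (Finset.mul_sum _ _ _).symm
  -- closed neighborhoods
  set B : ℕ → Finset V := fun z => insert (vert z) (G.neighborFinset (vert z)) with hB
  have hBcard : ∀ z, z < m → δ + 1 ≤ (B z).card := by
    intro z hz
    rw [hB]
    have hnm : vert z ∉ G.neighborFinset (vert z) := by
      simp [SimpleGraph.mem_neighborFinset]
    rw [Finset.card_insert_of_notMem hnm]
    have := G.minDegree_le_degree (vert z)
    rw [← SimpleGraph.card_neighborFinset_eq_degree] at this
    omega
  have hBf : ∀ z, z < m → ∀ v ∈ B z, f v = z := by
    intro z hz v hv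
    apply hfnear v z hz
    simp only [hB, Finset.mem_insert, SimpleGraph.mem_neighborFinset] at hv
    rcases hv with rfl | hadj
    · rw [SimpleGraph.dist_self]; omega
    · have := SimpleGraph.dist_le (SimpleGraph.Walk.cons hadj.symm SimpleGraph.Walk.nil)
      simpa using this
  -- key_count application
  have hWn : ∀ z ∈ Finset.Ico 1 m, Wt z ≤ n := by
    intro z _
    rw [hWt, hn]
    exact Finset.card_le_univ _
  have hpack : ∀ j : ℕ, 0 < j →
      (((Finset.Ico 1 m).filter (fun z => j ≤ Wt z ∧ j ≤ n - Wt z)).Nonempty) →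
      2*j + (((Finset.Ico 1 m).filter (fun z => j ≤ Wt z ∧ j ≤ n - Wt z)).card) * (δ+1)
        ≤ n + (δ+1) := by
    intro j hj hne
    exact pack_bound par hpar0 hparlt m hm0 f δ B hBcard hBf j hj hne
  have hkey := key_count n k δ hk2 hkn (Finset.Ico 1 m) Wt hWn hpack
  -- cast to ℚ
  set Cq : ℚ := (n.choose k : ℚ) with hCq
  have hCqpos : 0 < Cq := by
    rw [hCq]
    exact_mod_cast Nat.choose_pos hkn
  have hQcnt : ∀ z ∈ Finset.Ico 1 m,
      ((A.filter (fun S => (∃ v ∈ S, ancp par (f v) z) ∧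
        (∃ v ∈ S, ¬ ancp par (f v) z))).card : ℚ)
      = Cq - ((Wt z).choose k : ℚ) - ((n - Wt z).choose k : ℚ) := by
    intro z _
    have := hz_id z
    have hcast : ((A.filter (fun S => (∃ v ∈ S, ancp par (f v) z) ∧
        (∃ v ∈ S, ¬ ancp par (f v) z))).card : ℚ) + ((Wt z).choose k : ℚ)
        + ((n - Wt z).choose k : ℚ) = Cq := by
      rw [hCq]
      exact_mod_cast congrArg (Nat.cast : ℕ → ℚ) this
    linarith
  have hcastsum : ((∑ z ∈ Finset.Ico 1 m, (A.filter (fun S => (∃ v ∈ S, ancp par (f v) z) ∧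
        (∃ v ∈ S, ¬ ancp par (f v) z))).card : ℕ) : ℚ)
      = ∑ z ∈ Finset.Ico 1 m, (Cq - ((Wt z).choose k : ℚ) - ((n - Wt z).choose k : ℚ)) := by
    rw [Nat.cast_sum]
    exact Finset.sum_congr rfl hQcnt
  have htotalQ : (swk k G : ℚ) ≤ 2*(k:ℚ)*Cq
      + 3 * ∑ z ∈ Finset.Ico 1 m, (Cq - ((Wt z).choose k : ℚ) - ((n - Wt z).choose k : ℚ)) := by
    calc (swk k G : ℚ) ≤ ((2*k*(n.choose k)
        + 3 * ∑ z ∈ Finset.Ico 1 m, (A.filter (fun S => (∃ v ∈ S, ancp par (f v) z) ∧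
          (∃ v ∈ S, ¬ ancp par (f v) z))).card : ℕ) : ℚ) := Nat.cast_le.mpr htotal
      _ = 2*(k:ℚ)*Cq + 3 * ((∑ z ∈ Finset.Ico 1 m, (A.filter (fun S =>
          (∃ v ∈ S, ancp par (f v) z) ∧ (∃ v ∈ S, ¬ ancp par (f v) z))).card : ℕ) : ℚ) := by
          push_cast
          ring
      _ = _ := by rw [hcastsum]
  have hmain : (swk k G : ℚ) ≤ 2*(k:ℚ)*Cq
      + 3 * (Cq * (((n:ℚ)+1) * ((k:ℚ)-1) / (((k:ℚ)+1)*((δ:ℚ)+1)) + (δ:ℚ) / ((δ:ℚ)+1))) := by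
    refine le_trans htotalQ ?_
    have h3 : (0:ℚ) ≤ 3 := by norm_num
    nlinarith [hkey]
  have hδ1 : ((δ:ℚ)+1) ≠ 0 := by positivity
  have hk1 : ((k:ℚ)+1) ≠ 0 := by positivity
  have hRHS : 2*(k:ℚ)*Cq
      + 3 * (Cq * (((n:ℚ)+1) * ((k:ℚ)-1) / (((k:ℚ)+1)*((δ:ℚ)+1)) + (δ:ℚ) / ((δ:ℚ)+1)))
      = ((k : ℚ) - 1) / ((k : ℚ) + 1) * (3 * ((n : ℚ) + 1) / ((δ : ℚ) + 1)) * Cq +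
        (3 * (δ : ℚ) / ((δ : ℚ) + 1) + 2 * k) * Cq := by
    field_simp
    ring
  constructor
  · linarith [hmain, le_of_eq hRHS]
  · rw [div_le_iff₀ hCqpos]
    have : (((k : ℚ) - 1) / ((k : ℚ) + 1) * (3 * ((n : ℚ) + 1) / ((δ : ℚ) + 1)) +
        3 * (δ : ℚ) / ((δ : ℚ) + 1) + 2 * ↑k) * Cq
        = ((k : ℚ) - 1) / ((k : ℚ) + 1) * (3 * ((n : ℚ) + 1) / ((δ : ℚ) + 1)) * Cq +
        (3 * (δ : ℚ) / ((δ : ℚ) + 1) + 2 * ↑k) * Cq := by ring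
    rw [this]
    linarith [hmain, le_of_eq hRHS]
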